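/- arXiv:1605.05454 — 2 statements merged into one kernel-verified Lean document; each statement's English description precedes it below -/
import Mathlib

section
/- (Remark) With the particular weights w₁ = w₂ = (N−1)/(2(2N−1)) and w₃ = N/(2N−1), the corrected estimator Ṽ coincides identically with the Sun et al. estimator W with K = N groups of inner-level sample size n_k = 2: for all real numbers a₁, …, a_N and b₁, …, b_N, Ṽ = (SS_τ − ((N−1)/N)·SS_ε)/(2N − 2). -/
set_option maxHeartbeats 1000000


/-- With the weights `w₁ = w₂ = (N−1)/(2(2N−1))` and `w₃ = N/(2N−1)`, the corrected
estimator `Ṽ` coincides identically with the Sun et al. estimator `W` with `K = N`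
groups of inner-level sample size `nₖ = 2`:
`Ṽ = (SS_τ − ((N−1)/N)·SS_ε)/(2N − 2)`. -/
theorem corrected_estimator_eq_sun_et_al
    (N : ℕ) (hN : 2 ≤ N) (a b : Fin N → ℝ)
    (μhat μhat' s2 s2' w₁ w₂ w₃ V Vtilde : ℝ)
    (fbar : Fin N → ℝ) (fgrand SSτ SSε : ℝ)
    (hμhat : μhat = (N : ℝ)⁻¹ * ∑ n, a n)
    (hμhat' : μhat' = (N : ℝ)⁻¹ * ∑ n, b n)
    (hs2 : s2 = ((N : ℝ) - 1)⁻¹ * ∑ n, (a n - μhat) ^ 2)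
    (hs2' : s2' = ((N : ℝ) - 1)⁻¹ * ∑ n, (b n - μhat') ^ 2)
    (hw₁ : w₁ = ((N : ℝ) - 1) / (2 * (2 * (N : ℝ) - 1)))
    (hw₂ : w₂ = ((N : ℝ) - 1) / (2 * (2 * (N : ℝ) - 1)))
    (hw₃ : w₃ = (N : ℝ) / (2 * (N : ℝ) - 1))
    (hV : V = (N : ℝ)⁻¹ * ∑ n, a n * b n
      - (w₁ * μhat ^ 2 + w₂ * μhat' ^ 2 + w₃ * (μhat * μhat')))
    (hVtilde : Vtilde = ((N : ℝ) / ((N : ℝ) - w₃)) * (V + (w₁ * s2 + w₂ * s2') / (N : ℝ)))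
    (hfbar : ∀ k, fbar k = (a k + b k) / 2)
    (hfgrand : fgrand = (2 * (N : ℝ))⁻¹ * ∑ k, (a k + b k))
    (hSSτ : SSτ = ∑ k, 2 * (fbar k - fgrand) ^ 2)
    (hSSε : SSε = ∑ k, ((a k - fbar k) ^ 2 + (b k - fbar k) ^ 2)) :
    Vtilde = (SSτ - (((N : ℝ) - 1) / (N : ℝ)) * SSε) / (2 * (N : ℝ) - 2) := by
  have hN2 : (2:ℝ) ≤ (N:ℝ) := by exact_mod_cast hN
  have hN0 : (N:ℝ) ≠ 0 := by nlinarith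
  have h1 : (N:ℝ) - 1 ≠ 0 := by nlinarith
  have h2 : 2 * (N:ℝ) - 1 ≠ 0 := by nlinarith
  have h4 : 2 * (N:ℝ) - 2 ≠ 0 := by nlinarith
  have h3 : (N:ℝ) - w₃ ≠ 0 := by
    rw [hw₃]
    have he : (N:ℝ) - (N:ℝ)/(2*(N:ℝ)-1) = ((N:ℝ)*(2*(N:ℝ)-2))/(2*(N:ℝ)-1) := by
      rw [eq_div_iff h2, sub_mul, div_mul_cancel₀ _ h2]; ring
    rw [he]
    exact div_ne_zero (mul_ne_zero hN0 h4) h2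
  set Sa := ∑ n, a n with hSa
  set Sb := ∑ n, b n with hSb
  have eA : ∑ n, (a n - μhat)^2 = (∑ n, (a n)^2) - 2*μhat*Sa + N*μhat^2 := by
    have h : ∀ n : Fin N, (a n - μhat)^2 = (a n)^2 - (2*μhat)*(a n) + μhat^2 := fun n => by ring
    simp_rw [h]
    rw [Finset.sum_add_distrib, Finset.sum_sub_distrib, ← Finset.mul_sum, Finset.sum_const,
      Finset.card_fin, nsmul_eq_mul]
    all_goals ring
  have eB : ∑ n, (b n - μhat')^2 = (∑ n, (b n)^2) - 2*μhat'*Sb + N*μhat'^2 := by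
    have h : ∀ n : Fin N, (b n - μhat')^2 = (b n)^2 - (2*μhat')*(b n) + μhat'^2 := fun n => by ring
    simp_rw [h]
    rw [Finset.sum_add_distrib, Finset.sum_sub_distrib, ← Finset.mul_sum, Finset.sum_const,
      Finset.card_fin, nsmul_eq_mul]
    all_goals ring
  have eT : SSτ = (1/2) * (∑ n, (a n)^2) + (1/2) * (∑ n, (b n)^2) + (∑ n, a n * b n)
      - 2*fgrand*Sa - 2*fgrand*Sb + N*(2*fgrand^2) := by
    rw [hSSτ]
    have h : ∀ k : Fin N, 2 * (fbar k - fgrand)^2 =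
        (1/2)*(a k)^2 + (1/2)*(b k)^2 + a k * b k - (2*fgrand)*(a k) - (2*fgrand)*(b k)
          + 2*fgrand^2 := fun k => by rw [hfbar]; ring
    simp_rw [h]
    rw [Finset.sum_add_distrib, Finset.sum_sub_distrib, Finset.sum_sub_distrib,
      Finset.sum_add_distrib, Finset.sum_add_distrib, ← Finset.mul_sum, ← Finset.mul_sum,
      ← Finset.mul_sum, ← Finset.mul_sum, Finset.sum_const, Finset.card_fin, nsmul_eq_mul]
    all_goals ring
  have eE : SSε = (1/2) * (∑ n, (a n)^2) + (1/2) * (∑ n, (b n)^2) - (∑ n, a n * b n) := by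
    rw [hSSε]
    have h : ∀ k : Fin N, (a k - fbar k)^2 + (b k - fbar k)^2 =
        (1/2)*(a k)^2 + (1/2)*(b k)^2 - a k * b k := fun k => by rw [hfbar]; ring
    simp_rw [h]
    rw [Finset.sum_sub_distrib, Finset.sum_add_distrib, ← Finset.mul_sum, ← Finset.mul_sum]
  have hfg : fgrand = (2 * (N:ℝ))⁻¹ * (Sa + Sb) := by
    rw [hfgrand, Finset.sum_add_distrib]
  have hc : (N:ℝ)/((N:ℝ) - w₃) = (2*(N:ℝ)-1)/(2*(N:ℝ)-2) := by
    rw [hw₃]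
    have he : (N:ℝ) - (N:ℝ)/(2*(N:ℝ)-1) = ((N:ℝ)*(2*(N:ℝ)-2))/(2*(N:ℝ)-1) := by
      rw [eq_div_iff h2, sub_mul, div_mul_cancel₀ _ h2]; ring
    rw [he, div_div_eq_mul_div, mul_comm ((N:ℝ)) (2*(N:ℝ)-1), mul_comm ((N:ℝ)) (2*(N:ℝ)-2), mul_div_mul_right _ _ hN0]
  rw [hVtilde, hV, hs2, hs2', eA, eB, eT, eE, hμhat, hμhat', hw₁, hw₂, hc, hw₃, hfg]
  field_simp
  ring
end

section
/- The estimator W_m = N⁻¹ ∑_{n=1}^N ∏_{j=1}^m f(Xₙ⁽ʲ⁾) is an unbiased estimator of the m-th crude moment of the conditional expectation: E[W_m] = E[(E[f∘X⁽¹⁾ | 𝓖])^m]. -/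
open MeasureTheory ProbabilityTheory
open scoped ENNReal

open MeasureTheory ProbabilityTheory Filter
open scoped Topology
open scoped ENNReal

lemma aux_memLp_prod {α : Type*} [MeasurableSpace α] {μ : Measure α} [IsFiniteMeasure μ]
    {m : ℕ} (g : Fin m → α → ℝ) (hg : ∀ j, MemLp (g j) m μ) :
    ∀ (s : Finset (Fin m)) (p : ℝ≥0∞), 1 / p = s.card / m →
      MemLp (fun ω => ∏ j ∈ s, g j ω) p μ := by
  intro s
  induction s using Finset.cons_induction with
  | empty =>
    intro p hp
    simp only [Finset.card_empty, Nat.cast_zero, ENNReal.zero_div, one_div,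
      ENNReal.inv_eq_zero] at hp
    subst hp
    simpa using memLp_const (μ := μ) (1 : ℝ)
  | cons a s ha ih =>
    intro p hp
    have hr : (1 : ℝ≥0∞) / (((s.card : ℝ≥0∞) / m)⁻¹) = s.card / m := by
      rw [one_div, inv_inv]
    have ihs := ih _ hr
    have h1p : 1 / p = 1 / (m : ℝ≥0∞) + 1 / (((s.card : ℝ≥0∞) / m)⁻¹) := by
      rw [hp, hr, Finset.card_cons, Nat.cast_add, Nat.cast_one,
        ENNReal.div_add_div_same, add_comm]
    have h2 : MemLp (g a • fun ω => ∏ j ∈ s, g j ω) p μ := by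
      haveI : ENNReal.HolderTriple (m:ℝ≥0∞) (((s.card : ℝ≥0∞) / m)⁻¹) p :=
        ⟨by simpa only [one_div] using h1p.symm⟩
      exact ihs.smul (hg a)
    have : (g a • fun ω => ∏ j ∈ s, g j ω) = fun ω => ∏ j ∈ Finset.cons a s ha, g j ω := by
      ext ω; rw [Finset.prod_cons]; rfl
    rwa [this] at h2

lemma aux_integrable_prod {α : Type*} [MeasurableSpace α] {μ : Measure α} [IsFiniteMeasure μ]
    {m : ℕ} (hm : m ≠ 0) (g : Fin m → α → ℝ) (hg : ∀ j, MemLp (g j) m μ) :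
    Integrable (fun ω => ∏ j, g j ω) μ := by
  have h := aux_memLp_prod g hg Finset.univ 1 ?_
  · exact memLp_one_iff_integrable.mp h
  · rw [Finset.card_univ, Fintype.card_fin, one_div_one]
    exact (ENNReal.div_self (Nat.cast_ne_zero.mpr hm) (ENNReal.natCast_ne_top m)).symm


lemma aux_key {Ω : Type*} {𝓖 : MeasurableSpace Ω} [m0 : MeasurableSpace Ω]
    (hle : 𝓖 ≤ m0) (P : Measure Ω) [IsProbabilityMeasure P] {m : ℕ} (hm : 2 ≤ m)
    {g : Ω → ℝ} (hgmeas : Measurable g) (hg0 : ∀ ω, 0 ≤ g ω) {n : ℕ} (hgn : ∀ ω, g ω ≤ n) :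
    ∫⁻ ω, (‖(P[g|𝓖]) ω‖₊ : ℝ≥0∞) ^ m ∂P ≤ ∫⁻ ω, (‖g ω‖₊ : ℝ≥0∞) ^ m ∂P := by
  have hm1R : (1:ℝ) ≤ (m:ℝ) := by exact_mod_cast Nat.one_le_of_lt hm
  have hm2R : (2:ℝ) ≤ (m:ℝ) := by exact_mod_cast hm
  have hmne : (m:ℝ) ≠ 0 := by linarith
  have hm1ne : (m:ℝ) - 1 ≠ 0 := by linarith
  have hInt : Integrable g P :=
    ⟨hgmeas.aestronglyMeasurable, HasFiniteIntegral.of_bounded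
      (C := n) (Eventually.of_forall fun ω => by
        rw [Real.norm_eq_abs, abs_of_nonneg (hg0 ω)]; exact hgn ω)⟩
  set v := P[g|𝓖] with hv
  have hv_sm : StronglyMeasurable[𝓖] v := stronglyMeasurable_condExp
  have hv_meas : Measurable v := (hv_sm.mono hle).measurable
  have hv0 : 0 ≤ᵐ[P] v := condExp_nonneg (Eventually.of_forall hg0)
  have hvn : v ≤ᵐ[P] fun _ => (n : ℝ) := by
    have h2 := condExp_mono (m := 𝓖) hInt (integrable_const (n:ℝ))
      (Eventually.of_forall hgn)
    rwa [condExp_const hle] at h2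
  set A := ∫⁻ ω, (‖v ω‖₊ : ℝ≥0∞) ^ m ∂P with hA
  set C := ∫⁻ ω, (‖g ω‖₊ : ℝ≥0∞) ^ m ∂P with hC
  have hvbdd : ∀ᵐ ω ∂P, ‖v ω‖ ≤ (n:ℝ) := by
    filter_upwards [hv0, hvn] with ω h1 h2
    rw [Real.norm_eq_abs, abs_of_nonneg h1]; exact h2
  have hA_top : A ≠ ∞ := by
    have hle1 : A ≤ ∫⁻ _, ((n:ℝ≥0∞))^m ∂P := by
      refine lintegral_mono_ae ?_
      filter_upwards [hvbdd] with ω h1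
      refine pow_le_pow_left' ?_ m
      rw [← enorm_eq_nnnorm, Real.enorm_eq_ofReal_abs, ← Real.norm_eq_abs]
      exact (ENNReal.ofReal_le_ofReal h1).trans (by simp)
    rw [lintegral_const, measure_univ, mul_one] at hle1
    exact (hle1.trans_lt (ENNReal.pow_lt_top (ENNReal.natCast_lt_top n))).ne
  -- pull-out property
  have hw_sm : StronglyMeasurable[𝓖] (fun ω => v ω ^ (m - 1)) :=
    (hv_sm.measurable.pow_const _).stronglyMeasurable
  have hwg_int : Integrable (fun ω => v ω ^ (m-1) * g ω) P := by
    refine ⟨((hv_meas.pow_const _).mul hgmeas).aestronglyMeasurable,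
      HasFiniteIntegral.of_bounded (C := (n:ℝ)^(m-1) * n) ?_⟩
    filter_upwards [hvbdd] with ω h1
    have h1' : |v ω| ≤ (n:ℝ) := by rwa [← Real.norm_eq_abs]
    rw [Real.norm_eq_abs, abs_mul, abs_pow, abs_of_nonneg (hg0 ω)]
    exact mul_le_mul (pow_le_pow_left₀ (abs_nonneg _) h1' _) (hgn ω) (hg0 ω) (by positivity)
  have hpull : P[(fun ω => v ω ^ (m-1)) * g|𝓖] =ᵐ[P] (fun ω => v ω ^ (m-1)) * P[g|𝓖] :=
    condExp_mul_of_stronglyMeasurable_left hw_sm hwg_int hInt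
  have hIc : ∫ ω, v ω ^ m ∂P = ∫ ω, v ω ^ (m-1) * g ω ∂P := by
    calc ∫ ω, v ω ^ m ∂P = ∫ ω, ((fun ω => v ω ^ (m-1)) * P[g|𝓖]) ω ∂P := by
          refine integral_congr_ae (Eventually.of_forall fun ω => ?_)
          show v ω ^ m = v ω ^ (m-1) * v ω
          rw [← pow_succ, Nat.sub_add_cancel (by omega)]
    _ = ∫ ω, (P[(fun ω => v ω ^ (m-1)) * g|𝓖]) ω ∂P := (integral_congr_ae hpull).symm
    _ = ∫ ω, ((fun ω => v ω ^ (m-1)) * g) ω ∂P := integral_condExp hle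
    _ = ∫ ω, v ω ^ (m-1) * g ω ∂P := rfl
  have hvm_int : Integrable (fun ω => v ω ^ m) P := by
    refine ⟨(hv_meas.pow_const _).aestronglyMeasurable,
      HasFiniteIntegral.of_bounded (C := (n:ℝ)^m) ?_⟩
    filter_upwards [hvbdd] with ω h1
    have h1' : |v ω| ≤ (n:ℝ) := by rwa [← Real.norm_eq_abs]
    rw [Real.norm_eq_abs, abs_pow]
    exact pow_le_pow_left₀ (abs_nonneg _) h1' _
  have hA_eq : A = ENNReal.ofReal (∫ ω, v ω ^ m ∂P) := by
    rw [MeasureTheory.ofReal_integral_eq_lintegral_ofReal hvm_int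
      (hv0.mono fun ω h1 => pow_nonneg h1 m)]
    refine lintegral_congr_ae ?_
    filter_upwards [hv0] with ω h1
    rw [ENNReal.ofReal_pow h1, ← enorm_eq_nnnorm, Real.enorm_eq_ofReal h1]
  have hmul_eq : ENNReal.ofReal (∫ ω, v ω ^ (m-1) * g ω ∂P)
      = ∫⁻ ω, ((‖v ω‖₊ : ℝ≥0∞) ^ (m-1)) * (‖g ω‖₊ : ℝ≥0∞) ∂P := by
    rw [MeasureTheory.ofReal_integral_eq_lintegral_ofReal hwg_int
      (hv0.mono fun ω h1 => mul_nonneg (pow_nonneg h1 _) (hg0 ω))]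
    refine lintegral_congr_ae ?_
    filter_upwards [hv0] with ω h1
    rw [ENNReal.ofReal_mul (pow_nonneg h1 _), ENNReal.ofReal_pow h1,
      ← enorm_eq_nnnorm, ← enorm_eq_nnnorm, Real.enorm_eq_ofReal h1, Real.enorm_eq_ofReal (hg0 ω)]
  have hconj : Real.HolderConjugate ((m:ℝ)/((m:ℝ)-1)) m := by
    refine Real.holderConjugate_iff.mpr ⟨?_, ?_⟩
    · rw [lt_div_iff₀ (by linarith)]; linarith
    · rw [inv_div]
      field_simp
      ring
  have hHold := ENNReal.lintegral_mul_le_Lp_mul_Lq P hconj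
    (f := fun ω => (‖v ω‖₊ : ℝ≥0∞) ^ (m-1)) (g := fun ω => (‖g ω‖₊ : ℝ≥0∞))
    (hv_meas.nnnorm.coe_nnreal_ennreal.pow_const _).aemeasurable
    (hgmeas.nnnorm.coe_nnreal_ennreal).aemeasurable
  have hfp : ∀ x : ℝ≥0∞, (x ^ (m-1)) ^ ((m:ℝ)/((m:ℝ)-1)) = x ^ m := by
    intro x
    rw [← ENNReal.rpow_natCast x (m-1), ← ENNReal.rpow_mul, ← ENNReal.rpow_natCast x m]
    congr 1
    rw [Nat.cast_sub (by omega), Nat.cast_one]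
    field_simp
  have hexp : (1:ℝ)/((m:ℝ)/((m:ℝ)-1)) = 1 - 1/(m:ℝ) := by
    rw [one_div_div]; field_simp
  have hchain : A ≤ A ^ (1 - 1/(m:ℝ)) * C ^ ((1:ℝ)/(m:ℝ)) := by
    calc A = ENNReal.ofReal (∫ ω, v ω ^ (m-1) * g ω ∂P) := by rw [hA_eq, hIc]
    _ = ∫⁻ ω, ((‖v ω‖₊ : ℝ≥0∞) ^ (m-1)) * (‖g ω‖₊ : ℝ≥0∞) ∂P := hmul_eq
    _ ≤ (∫⁻ ω, ((‖v ω‖₊ : ℝ≥0∞) ^ (m-1)) ^ ((m:ℝ)/((m:ℝ)-1)) ∂P) ^ ((1:ℝ)/((m:ℝ)/((m:ℝ)-1)))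
        * (∫⁻ ω, (‖g ω‖₊ : ℝ≥0∞) ^ (m:ℝ) ∂P) ^ ((1:ℝ)/(m:ℝ)) := hHold
    _ = A ^ (1 - 1/(m:ℝ)) * C ^ ((1:ℝ)/(m:ℝ)) := by
        rw [hexp]
        congr 1
        · congr 1
          exact lintegral_congr fun ω => hfp _
        · congr 1
          exact lintegral_congr fun ω => (ENNReal.rpow_natCast _ m).symm ▸ rfl
  by_cases hA0 : A = 0
  · rw [hA0]; exact zero_le
  have hsplit : A = A ^ (1 - 1/(m:ℝ)) * A ^ ((1:ℝ)/(m:ℝ)) := by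
    rw [← ENNReal.rpow_add _ _ hA0 hA_top]
    norm_num
  have hne0 : A ^ (1 - 1/(m:ℝ)) ≠ 0 := by
    simp only [ne_eq, ENNReal.rpow_eq_zero_iff, not_or]
    exact ⟨fun h => hA0 h.1, fun h => hA_top h.1⟩
  have hnetop : A ^ (1 - 1/(m:ℝ)) ≠ ∞ := by
    simp only [ne_eq, ENNReal.rpow_eq_top_iff, not_or]
    exact ⟨fun h => hA0 h.1, fun h => hA_top h.1⟩
  have hcancel : A ^ ((1:ℝ)/(m:ℝ)) ≤ C ^ ((1:ℝ)/(m:ℝ)) :=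
    (ENNReal.mul_le_mul_iff_right hne0 hnetop).mp (hsplit ▸ hchain)
  calc A = (A ^ ((1:ℝ)/(m:ℝ))) ^ (m:ℝ) := by
        rw [← ENNReal.rpow_mul, one_div, inv_mul_cancel₀ hmne, ENNReal.rpow_one]
  _ ≤ (C ^ ((1:ℝ)/(m:ℝ))) ^ (m:ℝ) := ENNReal.rpow_le_rpow hcancel (by positivity)
  _ = C := by rw [← ENNReal.rpow_mul, one_div, inv_mul_cancel₀ hmne, ENNReal.rpow_one]

lemma aux_condexp_pow_integrable {Ω : Type*} {𝓖 : MeasurableSpace Ω} [m0 : MeasurableSpace Ω]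
    (hle : 𝓖 ≤ m0) (P : Measure Ω) [IsProbabilityMeasure P] {m : ℕ} (hm : 2 ≤ m)
    {h : Ω → ℝ} (hmeas : Measurable h) (h0 : ∀ ω, 0 ≤ h ω) (hmem : MemLp h (m : ℝ≥0∞) P) :
    Integrable (fun ω => ((P[h|𝓖]) ω) ^ m) P := by
  have hm1 : (1:ℝ≥0∞) ≤ (m : ℝ≥0∞) := by exact_mod_cast (by omega : 1 ≤ m)
  have hInt : Integrable h P := hmem.integrable hm1
  set v := P[h|𝓖] with hv
  have hv_meas : Measurable v := (stronglyMeasurable_condExp.mono hle).measurable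
  set B := ∫⁻ ω, (‖h ω‖₊ : ℝ≥0∞) ^ m ∂P with hB
  have hB_top : B ≠ ∞ := by
    have h1 := lintegral_rpow_enorm_lt_top_of_eLpNorm_lt_top (f := h) (μ := P)
      (p := (m:ℝ≥0∞)) (by exact_mod_cast (by omega : m ≠ 0)) (by simp) hmem.2
    have h2 : ∫⁻ ω, ‖h ω‖ₑ ^ ((m:ℝ≥0∞).toReal) ∂P = B := by
      rw [hB]
      refine lintegral_congr fun ω => ?_
      rw [ENNReal.toReal_natCast, ENNReal.rpow_natCast]; rfl
    rw [h2] at h1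
    exact h1.ne
  set hn : ℕ → Ω → ℝ := fun n ω => min (h ω) n with hhn
  have hn_meas : ∀ n, Measurable (hn n) := fun n => hmeas.min measurable_const
  have hn_nonneg : ∀ n ω, 0 ≤ hn n ω := fun n ω => le_min (h0 ω) (n.cast_nonneg)
  have hn_le : ∀ n ω, hn n ω ≤ h ω := fun n ω => min_le_left _ _
  have hn_len : ∀ n ω, hn n ω ≤ (n:ℝ) := fun n ω => min_le_right _ _
  have hn_int : ∀ n, Integrable (hn n) P := fun n =>
    hInt.mono (hn_meas n).aestronglyMeasurable (Eventually.of_forall fun ω => by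
      rw [Real.norm_eq_abs, Real.norm_eq_abs, abs_of_nonneg (hn_nonneg n ω),
        abs_of_nonneg (h0 ω)]
      exact hn_le n ω)
  set vn : ℕ → Ω → ℝ := fun n => P[hn n|𝓖] with hvndef
  have key : ∀ n, ∫⁻ ω, (‖vn n ω‖₊ : ℝ≥0∞) ^ m ∂P ≤ B := by
    intro n
    refine (aux_key hle P hm (hn_meas n) (hn_nonneg n) (hn_len n)).trans
      (lintegral_mono fun ω => pow_le_pow_left' ?_ m)
    rw [← enorm_eq_nnnorm, ← enorm_eq_nnnorm, Real.enorm_eq_ofReal_abs, Real.enorm_eq_ofReal_abs]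
    refine ENNReal.ofReal_le_ofReal ?_
    rw [abs_of_nonneg (hn_nonneg n ω), abs_of_nonneg (h0 ω)]
    exact hn_le n ω
  -- L¹ convergence of vn to v
  have h_tend0 : Tendsto (fun n => eLpNorm (hn n - h) 1 P) atTop (𝓝 0) := by
    simp_rw [eLpNorm_one_eq_lintegral_enorm]
    have hlim := tendsto_lintegral_of_dominated_convergence (μ := P)
      (F := fun n ω => (‖(hn n - h) ω‖₊ : ℝ≥0∞)) (f := fun _ => 0)
      (bound := fun ω => (‖h ω‖₊ : ℝ≥0∞))
      (fun n => ((hn_meas n).sub hmeas).nnnorm.coe_nnreal_ennreal)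
      (fun n => Eventually.of_forall fun ω => by
        have : |hn n ω - h ω| ≤ |h ω| := by
          rw [abs_of_nonpos (by simpa using hn_le n ω), abs_of_nonneg (h0 ω)]
          have := hn_nonneg n ω
          linarith
        simp only [Pi.sub_apply]
        rw [← enorm_eq_nnnorm, ← enorm_eq_nnnorm, Real.enorm_eq_ofReal_abs, Real.enorm_eq_ofReal_abs]
        exact ENNReal.ofReal_le_ofReal this)
      hInt.2.ne ?_
    · simpa [← enorm_eq_nnnorm] using hlim
    · refine Eventually.of_forall fun ω => ?_
      have hev : ∀ᶠ n in atTop, (‖(hn n - h) ω‖₊ : ℝ≥0∞) = 0 := by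
        filter_upwards [eventually_ge_atTop ⌈h ω⌉₊] with n hn'
        have : hn n ω = h ω := min_eq_left ((Nat.le_ceil _).trans (by exact_mod_cast hn'))
        simp [Pi.sub_apply, this]
      exact Tendsto.congr' (hev.mono fun n h2 => h2.symm) tendsto_const_nhds
  have h_tendv : Tendsto (fun n => eLpNorm (vn n - v) 1 P) atTop (𝓝 0) := by
    refine tendsto_of_tendsto_of_tendsto_of_le_of_le tendsto_const_nhds h_tend0
      (fun n => zero_le) (fun n => ?_)
    have hsub : vn n - v =ᵐ[P] P[hn n - h|𝓖] := (condExp_sub (hn_int n) hInt 𝓖).symm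
    exact (le_of_eq (eLpNorm_congr_ae hsub)).trans (eLpNorm_one_condExp_le_eLpNorm _)
  have htim : TendstoInMeasure P vn atTop v :=
    tendstoInMeasure_of_tendsto_eLpNorm_of_ne_top one_ne_zero ENNReal.one_ne_top
      (fun n => (stronglyMeasurable_condExp.mono hle).aestronglyMeasurable)
      (stronglyMeasurable_condExp.mono hle).aestronglyMeasurable h_tendv
  obtain ⟨ns, hns_mono, hae⟩ := htim.exists_seq_tendsto_ae
  have hAv : ∫⁻ ω, (‖v ω‖₊ : ℝ≥0∞) ^ m ∂P ≤ B := by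
    have hptw : ∀ᵐ ω ∂P, Tendsto (fun l => (‖vn (ns l) ω‖₊ : ℝ≥0∞) ^ m) atTop
        (𝓝 ((‖v ω‖₊ : ℝ≥0∞) ^ m)) := by
      filter_upwards [hae] with ω hω
      have h1 : Tendsto (fun l => ‖vn (ns l) ω‖₊) atTop (𝓝 ‖v ω‖₊) :=
        (continuous_nnnorm.tendsto _).comp hω
      have h2 : Tendsto (fun l => ‖vn (ns l) ω‖₊ ^ m) atTop (𝓝 (‖v ω‖₊ ^ m)) := h1.pow m
      have h3 := ENNReal.tendsto_coe.mpr h2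
      simpa [ENNReal.coe_pow] using h3
    have heq : ∫⁻ ω, (‖v ω‖₊:ℝ≥0∞)^m ∂P
        = ∫⁻ ω, liminf (fun l => (‖vn (ns l) ω‖₊:ℝ≥0∞)^m) atTop ∂P :=
      lintegral_congr_ae (hptw.mono fun ω hω => hω.liminf_eq.symm)
    rw [heq]
    refine (lintegral_liminf_le fun l =>
      ((stronglyMeasurable_condExp.mono hle).measurable.nnnorm.coe_nnreal_ennreal.pow_const m)).trans ?_
    refine (liminf_le_liminf (Eventually.of_forall fun l => key (ns l))).trans ?_
    simp [liminf_const]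
  refine ⟨(hv_meas.pow_const m).aestronglyMeasurable, ?_⟩
  have : ∫⁻ ω, (‖v ω ^ m‖₊ : ℝ≥0∞) ∂P < ∞ := by
    have heq : ∫⁻ ω, (‖v ω ^ m‖₊ : ℝ≥0∞) ∂P = ∫⁻ ω, (‖v ω‖₊:ℝ≥0∞)^m ∂P :=
      lintegral_congr fun ω => by rw [nnnorm_pow, ENNReal.coe_pow]
    rw [heq]
    exact hAv.trans_lt hB_top.lt_top
  exact this

lemma trunc_abs_le_self (k : ℕ) (y : ℝ) : |max (-(k:ℝ)) (min (k:ℝ) y)| ≤ |y| := by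
  have hk : (0:ℝ) ≤ k := Nat.cast_nonneg k
  rcases le_or_gt 0 y with hy | hy
  · have hmin : 0 ≤ min (k:ℝ) y := le_min hk hy
    rw [max_eq_right (le_trans (by linarith) hmin), abs_of_nonneg hmin, abs_of_nonneg hy]
    exact min_le_right _ _
  · have h1 : min (k:ℝ) y = y := min_eq_right (by linarith)
    rw [h1]
    rcases le_or_gt (-(k:ℝ)) y with h2 | h2
    · rw [max_eq_right h2]
    · rw [max_eq_left h2.le, abs_of_nonpos (by linarith), abs_of_neg hy]
      linarith

lemma trunc_abs_le (k : ℕ) (y : ℝ) : |max (-(k:ℝ)) (min (k:ℝ) y)| ≤ (k:ℝ) := by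
  have hk : (0:ℝ) ≤ k := Nat.cast_nonneg k
  refine abs_le.mpr ⟨le_max_left _ _, max_le (by linarith) (min_le_left _ _)⟩

lemma trunc_tendsto (y : ℝ) :
    Tendsto (fun k : ℕ => max (-(k:ℝ)) (min (k:ℝ) y)) atTop (𝓝 y) := by
  refine Tendsto.congr' ?_ (tendsto_const_nhds (x := y))
  filter_upwards [eventually_ge_atTop ⌈|y|⌉₊] with k hk
  have hky : |y| ≤ (k:ℝ) := (Nat.le_ceil _).trans (by exact_mod_cast hk)
  have h1 : min (k:ℝ) y = y := min_eq_right ((le_abs_self y).trans hky)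
  rw [h1, max_eq_right (by have := neg_abs_le y; linarith)]


/-- `W_m = N⁻¹ ∑ₙ ∏ⱼ f(Xₙ⁽ʲ⁾)` is an unbiased estimator of the `m`-th crude moment
of the conditional expectation: `E[W_m] = E[(E[f∘X⁽¹⁾ | 𝓖])^m]`. -/
theorem estimator_Wm_unbiased
    {Ω E F : Type*} (𝓖 : MeasurableSpace Ω)
    [MeasurableSpace Ω] [MeasurableSpace E] [MeasurableSpace F]
    (P : Measure Ω) [IsProbabilityMeasure P]
    (Y : Ω → E) (m : ℕ) (hm : 2 ≤ m) (X : Fin m → Ω → F) (f : F → ℝ)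
    (hY : Measurable Y) (hX : ∀ j, Measurable (X j)) (hf : Measurable f)
    (h𝓖 : 𝓖 = MeasurableSpace.comap Y inferInstance)
    -- mutual conditional independence of `X⁽¹⁾, …, X⁽ᵐ⁾` given `𝓖 = σ(Y)`
    (hCondIndep : ∀ g : Fin m → F → ℝ, (∀ j, Measurable (g j)) →
      (∀ j, ∃ C, ∀ x, |g j x| ≤ C) →
      P[(fun ω => ∏ j, g j (X j ω))|𝓖]
        =ᵐ[P] fun ω => ∏ j, ((P[(fun ω' => g j (X j ω'))|𝓖]) ω))
    -- the `X⁽ʲ⁾` all have the same conditional distribution given `𝓖`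
    (hSameCondDist : ∀ g : F → ℝ, Measurable g → (∃ C, ∀ x, |g x| ≤ C) → ∀ j k,
      P[(fun ω => g (X j ω))|𝓖] =ᵐ[P] P[(fun ω => g (X k ω))|𝓖])
    (hLm : MemLp (fun ω => f (X ⟨0, by omega⟩ ω)) (m : ℝ≥0∞) P)
    (μ : ℝ) (hμ : μ = ∫ ω, f (X ⟨0, by omega⟩ ω) ∂P)
    (N : ℕ) (hN : 0 < N)
    -- i.i.d. sample tuples `(Yₙ, Xₙ⁽¹⁾, …, Xₙ⁽ᵐ⁾)` distributed as `(Y, X⁽¹⁾, …, X⁽ᵐ⁾)`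
    (Ys : Fin N → Ω → E) (Xs : Fin N → Fin m → Ω → F)
    (hYs : ∀ n, Measurable (Ys n)) (hXs : ∀ n j, Measurable (Xs n j))
    (hIndep : iIndepFun (fun n ω => (Ys n ω, fun j => Xs n j ω)) P)
    (hIdent : ∀ n, Measure.map (fun ω => (Ys n ω, fun j => Xs n j ω)) P
        = Measure.map (fun ω => (Y ω, fun j => X j ω)) P)
    :
    ∫ ω, (N : ℝ)⁻¹ * ∑ n, ∏ j, f (Xs n j ω) ∂P
      = ∫ ω, ((P[(fun ω' => f (X ⟨0, by omega⟩ ω'))|𝓖]) ω) ^ m ∂P := by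
  classical
  have h0m : 0 < m := by omega
  have hle : 𝓖 ≤ ‹MeasurableSpace Ω› := h𝓖 ▸ hY.comap_le
  set X0 : Ω → F := X ⟨0, h0m⟩ with hX0def
  have hm1 : (1:ℝ≥0∞) ≤ (m:ℝ≥0∞) := by exact_mod_cast (by omega : 1 ≤ m)
  have hLm' : MemLp (fun ω => f (X0 ω)) (m:ℝ≥0∞) P := hLm
  have hfX0_int : Integrable (fun ω => f (X0 ω)) P := hLm'.integrable hm1
  -- equality of distributions of the X j
  have hmap : ∀ j, Measure.map (X j) P = Measure.map X0 P := by
    intro j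
    refine Measure.ext fun s hs => ?_
    have hgmeas : Measurable (s.indicator (fun _ => (1:ℝ))) :=
      measurable_const.indicator hs
    have hgbdd : ∃ C, ∀ x, |s.indicator (fun _ => (1:ℝ)) x| ≤ C :=
      ⟨1, fun x => by by_cases hx : x ∈ s <;> simp [hx]⟩
    have hcd := hSameCondDist _ hgmeas hgbdd j ⟨0, h0m⟩
    have hint := integral_congr_ae hcd
    rw [integral_condExp hle, integral_condExp hle] at hint
    have hform : ∀ (Z : Ω → F), Measurable Z →
        ∫ ω, s.indicator (fun _ => (1:ℝ)) (Z ω) ∂P = (P (Z ⁻¹' s)).toReal := by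
      intro Z hZ
      have : (fun ω => s.indicator (fun _ => (1:ℝ)) (Z ω))
          = (Z ⁻¹' s).indicator (fun _ => (1:ℝ)) := by
        ext ω; by_cases hω : Z ω ∈ s <;> simp [hω, Set.indicator_apply, Set.mem_preimage]
      rw [this, integral_indicator_const (1:ℝ) (hZ hs)]
      simp [measureReal_def]
    rw [hform (X j) (hX j), hform X0 (hX _)] at hint
    rw [Measure.map_apply (hX j) hs, Measure.map_apply (hX _) hs]
    exact (ENNReal.toReal_eq_toReal_iff' (measure_ne_top P _) (measure_ne_top P _)).mp hint
  -- each f ∘ X j is in L^m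
  have hLmj : ∀ j, MemLp (fun ω => f (X j ω)) (m:ℝ≥0∞) P := by
    intro j
    have h1 : MemLp f (m:ℝ≥0∞) (Measure.map X0 P) :=
      (memLp_map_measure_iff hf.aestronglyMeasurable (hX _).aemeasurable).mpr hLm'
    rw [← hmap j] at h1
    exact (memLp_map_measure_iff hf.aestronglyMeasurable (hX j).aemeasurable).mp h1
  have hIprod : Integrable (fun ω => ∏ j, f (X j ω)) P :=
    aux_integrable_prod (by omega) _ hLmj
  -- Step 1 : the LHS equals ∫ ∏ f (X j)
  have hφ : Measurable (fun p : E × (Fin m → F) => ∏ j, f (p.2 j)) :=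
    Finset.measurable_prod _ fun j _ => hf.comp ((measurable_pi_apply j).comp measurable_snd)
  have hT : Measurable (fun ω => (Y ω, fun j => X j ω)) :=
    hY.prodMk (measurable_pi_lambda _ fun j => hX j)
  have hTn : ∀ n, Measurable (fun ω => (Ys n ω, fun j => Xs n j ω)) :=
    fun n => (hYs n).prodMk (measurable_pi_lambda _ fun j => hXs n j)
  have hstep1 : ∀ n, ∫ ω, ∏ j, f (Xs n j ω) ∂P = ∫ ω, ∏ j, f (X j ω) ∂P := by
    intro n
    calc ∫ ω, ∏ j, f (Xs n j ω) ∂P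
        = ∫ p, (fun p : E × (Fin m → F) => ∏ j, f (p.2 j)) p
            ∂(Measure.map (fun ω => (Ys n ω, fun j => Xs n j ω)) P) :=
          (integral_map (hTn n).aemeasurable hφ.aestronglyMeasurable).symm
      _ = ∫ p, (fun p : E × (Fin m → F) => ∏ j, f (p.2 j)) p
            ∂(Measure.map (fun ω => (Y ω, fun j => X j ω)) P) := by rw [hIdent n]
      _ = ∫ ω, ∏ j, f (X j ω) ∂P :=
          integral_map hT.aemeasurable hφ.aestronglyMeasurable
  have hIntn : ∀ n : Fin N, Integrable (fun ω => ∏ j, f (Xs n j ω)) P := by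
    intro n
    have h1 : Integrable (fun p : E × (Fin m → F) => ∏ j, f (p.2 j))
        (Measure.map (fun ω => (Y ω, fun j => X j ω)) P) :=
      (integrable_map_measure hφ.aestronglyMeasurable hT.aemeasurable).mpr hIprod
    rw [← hIdent n] at h1
    exact (integrable_map_measure hφ.aestronglyMeasurable (hTn n).aemeasurable).mp h1
  have hL : ∫ ω, (N:ℝ)⁻¹ * ∑ n, ∏ j, f (Xs n j ω) ∂P = ∫ ω, ∏ j, f (X j ω) ∂P := by
    rw [integral_const_mul, integral_finset_sum _ (fun n _ => hIntn n)]
    rw [Finset.sum_congr rfl (fun n _ => hstep1 n), Finset.sum_const, Finset.card_univ,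
      Fintype.card_fin, nsmul_eq_mul, ← mul_assoc,
      inv_mul_cancel₀ (by exact_mod_cast hN.ne' : (N:ℝ) ≠ 0), one_mul]
  rw [hL]
  -- truncations
  set gk : ℕ → F → ℝ := fun k x => max (-(k:ℝ)) (min (k:ℝ) (f x)) with hgkdef
  have gk_meas : ∀ k, Measurable (gk k) :=
    fun k => measurable_const.max (measurable_const.min hf)
  have gk_bdd : ∀ k x, |gk k x| ≤ (k:ℝ) := fun k x => trunc_abs_le k (f x)
  have gk_le : ∀ k x, |gk k x| ≤ |f x| := fun k x => trunc_abs_le_self k (f x)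
  -- the conditional expectations
  set u : ℕ → Ω → ℝ := fun k => P[(fun ω' => gk k (X0 ω'))|𝓖] with hudef
  set uI : Ω → ℝ := P[(fun ω' => f (X0 ω'))|𝓖] with huIdef
  have hgkX0_int : ∀ k, Integrable (fun ω => gk k (X0 ω)) P := fun k =>
    ⟨((gk_meas k).comp (hX _)).aestronglyMeasurable,
      HasFiniteIntegral.of_bounded (C := (k:ℝ)) (Eventually.of_forall fun ω => by
        rw [Real.norm_eq_abs]; exact gk_bdd k _)⟩
  -- A k = B k
  have hABk : ∀ k, ∫ ω, ∏ j, gk k (X j ω) ∂P = ∫ ω, (u k ω) ^ m ∂P := by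
    intro k
    have hint : Integrable (fun ω => ∏ j, gk k (X j ω)) P := by
      refine ⟨(Finset.measurable_prod _ fun j _ =>
        (gk_meas k).comp (hX j)).aestronglyMeasurable,
        HasFiniteIntegral.of_bounded (C := (k:ℝ)^m) (Eventually.of_forall fun ω => ?_)⟩
      rw [Real.norm_eq_abs, Finset.abs_prod]
      calc ∏ j, |gk k (X j ω)| ≤ ∏ _j : Fin m, (k:ℝ) :=
            Finset.prod_le_prod (fun j _ => abs_nonneg _) (fun j _ => gk_bdd k _)
        _ = (k:ℝ)^m := by rw [Finset.prod_const, Finset.card_univ, Fintype.card_fin]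
    have h1 : ∫ ω, ∏ j, gk k (X j ω) ∂P
        = ∫ ω, (P[(fun ω => ∏ j, gk k (X j ω))|𝓖]) ω ∂P := (integral_condExp hle).symm
    rw [h1]
    refine integral_congr_ae ?_
    have h2 := hCondIndep (fun _ => gk k) (fun _ => gk_meas k) (fun _ => ⟨k, gk_bdd k⟩)
    have h3 : ∀ j : Fin m, P[(fun ω' => gk k (X j ω'))|𝓖] =ᵐ[P]
        P[(fun ω' => gk k (X0 ω'))|𝓖] := fun j =>
      hSameCondDist (gk k) (gk_meas k) ⟨k, gk_bdd k⟩ j ⟨0, h0m⟩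
    filter_upwards [h2, ae_all_iff.mpr h3] with ω hω1 hω2
    rw [hω1, Finset.prod_congr rfl (fun j _ => hω2 j), Finset.prod_const,
      Finset.card_univ, Fintype.card_fin]
  -- A k → ∫ ∏ f(X j)
  have hAI : Tendsto (fun k => ∫ ω, ∏ j, gk k (X j ω) ∂P) atTop
      (𝓝 (∫ ω, ∏ j, f (X j ω) ∂P)) := by
    refine tendsto_integral_of_dominated_convergence
      (bound := fun ω => ∏ j, |f (X j ω)|)
      (fun k => (Finset.measurable_prod _ fun j _ =>
        (gk_meas k).comp (hX j)).aestronglyMeasurable)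
      ?_ (fun k => Eventually.of_forall fun ω => ?_) (Eventually.of_forall fun ω => ?_)
    · have := aux_integrable_prod (by omega : m ≠ 0) (fun j ω => |f (X j ω)|)
        (fun j => by simpa [Real.norm_eq_abs] using (hLmj j).norm)
      exact this
    · rw [Real.norm_eq_abs, Finset.abs_prod]
      exact Finset.prod_le_prod (fun j _ => abs_nonneg _) (fun j _ => gk_le k _)
    · exact tendsto_finset_prod _ fun j _ => trunc_tendsto (f (X j ω))
  -- L¹ convergence of u k to uI
  have hu_tend : Tendsto (fun k => eLpNorm (u k - uI) 1 P) atTop (𝓝 0) := by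
    have h_tend0 : Tendsto (fun k => eLpNorm ((fun ω => gk k (X0 ω)) - fun ω => f (X0 ω)) 1 P)
        atTop (𝓝 0) := by
      simp_rw [eLpNorm_one_eq_lintegral_enorm]
      have hbd_int : ∫⁻ ω, ((2:ℝ≥0∞) * (‖f (X0 ω)‖₊ : ℝ≥0∞)) ∂P ≠ ∞ := by
        rw [lintegral_const_mul' _ _ (by simp)]
        exact (ENNReal.mul_lt_top (by simp) hfX0_int.2).ne
      have hlim := tendsto_lintegral_of_dominated_convergence (μ := P)
        (F := fun k ω => (‖((fun ω => gk k (X0 ω)) - fun ω => f (X0 ω)) ω‖₊ : ℝ≥0∞))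
        (f := fun _ => 0)
        (bound := fun ω => (2:ℝ≥0∞) * (‖f (X0 ω)‖₊ : ℝ≥0∞))
        (fun k => (((gk_meas k).comp (hX _)).sub
          (hf.comp (hX _))).nnnorm.coe_nnreal_ennreal)
        (fun k => Eventually.of_forall fun ω => by
          simp only [Pi.sub_apply]
          rw [← enorm_eq_nnnorm, ← enorm_eq_nnnorm, Real.enorm_eq_ofReal_abs, Real.enorm_eq_ofReal_abs,
            ← ENNReal.ofReal_ofNat, ← ENNReal.ofReal_mul (by norm_num)]
          refine ENNReal.ofReal_le_ofReal ?_
          calc |gk k (X0 ω) - f (X0 ω)| ≤ |gk k (X0 ω)| + |f (X0 ω)| := abs_sub _ _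
            _ ≤ |f (X0 ω)| + |f (X0 ω)| := by
                have := gk_le k (X0 ω); linarith
            _ = 2 * |f (X0 ω)| := by ring)
        hbd_int ?_
      · simpa [← enorm_eq_nnnorm] using hlim
      · refine Eventually.of_forall fun ω => ?_
        have hev : ∀ᶠ k in atTop,
            (‖((fun ω => gk k (X0 ω)) - fun ω => f (X0 ω)) ω‖₊ : ℝ≥0∞) = 0 := by
          filter_upwards [eventually_ge_atTop ⌈|f (X0 ω)|⌉₊] with k hk
          have hky : |f (X0 ω)| ≤ (k:ℝ) := (Nat.le_ceil _).trans (by exact_mod_cast hk)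
          have h1 : min (k:ℝ) (f (X0 ω)) = f (X0 ω) :=
            min_eq_right ((le_abs_self _).trans hky)
          have h2 : gk k (X0 ω) = f (X0 ω) := by
            rw [hgkdef]
            simp only []
            rw [h1, max_eq_right (by have := neg_abs_le (f (X0 ω)); linarith)]
          simp [Pi.sub_apply, h2]
        exact Tendsto.congr' (hev.mono fun k h2 => h2.symm) tendsto_const_nhds
    refine tendsto_of_tendsto_of_tendsto_of_le_of_le tendsto_const_nhds h_tend0
      (fun k => zero_le) (fun k => ?_)
    have hsub : u k - uI =ᵐ[P] P[(fun ω => gk k (X0 ω)) - fun ω => f (X0 ω)|𝓖] :=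
      (condExp_sub (hgkX0_int k) hfX0_int 𝓖).symm
    exact (le_of_eq (eLpNorm_congr_ae hsub)).trans (eLpNorm_one_condExp_le_eLpNorm _)
  have htim : TendstoInMeasure P u atTop uI :=
    tendstoInMeasure_of_tendsto_eLpNorm_of_ne_top one_ne_zero ENNReal.one_ne_top
      (fun k => (stronglyMeasurable_condExp.mono hle).aestronglyMeasurable)
      (stronglyMeasurable_condExp.mono hle).aestronglyMeasurable hu_tend
  obtain ⟨ns, hns_mono, hae⟩ := htim.exists_seq_tendsto_ae
  -- dominating function for the conditional expectations
  set w : Ω → ℝ := P[(fun ω => |f (X0 ω)|)|𝓖] with hwdef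
  have habsfX0_int : Integrable (fun ω => |f (X0 ω)|) P := hfX0_int.abs
  have habs : ∀ k, ∀ᵐ ω ∂P, |u k ω| ≤ w ω := by
    intro k
    have hA1 := condExp_mono (m := 𝓖) (hgkX0_int k) habsfX0_int
      (Eventually.of_forall fun ω => (le_abs_self _).trans (gk_le k (X0 ω)))
    have hA2 := condExp_mono (m := 𝓖) (hgkX0_int k).neg habsfX0_int
      (Eventually.of_forall fun ω => by
        have h5 := gk_le k (X0 ω)
        have h3 : -(gk k (X0 ω)) ≤ |gk k (X0 ω)| := neg_le_abs _
        show -(gk k (X0 ω)) ≤ |f (X0 ω)|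
        linarith)
    have hA3 := condExp_neg (μ := P) (m := 𝓖) (fun ω => gk k (X0 ω))
    filter_upwards [hA1, hA2, hA3] with ω h1 h2 h3
    refine abs_le.mpr ⟨?_, h1⟩
    have h4 : (P[-fun ω => gk k (X0 ω)|𝓖]) ω = -(u k ω) := by rw [h3]; rfl
    rw [h4] at h2
    linarith
  have hw_pow_int : Integrable (fun ω => (w ω)^m) P := by
    refine aux_condexp_pow_integrable hle P hm ((hf.comp (hX _)).abs)
      (fun ω => abs_nonneg _) ?_
    simpa [Real.norm_eq_abs] using hLm'.norm
  -- B along the subsequence tends to ∫ uI^m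
  have hBR : Tendsto (fun l => ∫ ω, (u (ns l) ω) ^ m ∂P) atTop
      (𝓝 (∫ ω, (uI ω) ^ m ∂P)) := by
    refine tendsto_integral_of_dominated_convergence
      (bound := fun ω => (w ω)^m)
      (fun l => ((stronglyMeasurable_condExp.mono hle).measurable.pow_const
        m).aestronglyMeasurable)
      hw_pow_int (fun l => ?_) ?_
    · filter_upwards [habs (ns l)] with ω h1
      rw [Real.norm_eq_abs, abs_pow]
      exact pow_le_pow_left₀ (abs_nonneg _) h1 m
    · filter_upwards [hae] with ω hω
      exact hω.pow m
  -- conclude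
  have h1 : Tendsto (fun l => ∫ ω, ∏ j, gk (ns l) (X j ω) ∂P) atTop
      (𝓝 (∫ ω, ∏ j, f (X j ω) ∂P)) := hAI.comp hns_mono.tendsto_atTop
  have h2 : (fun l => ∫ ω, ∏ j, gk (ns l) (X j ω) ∂P)
      = fun l => ∫ ω, (u (ns l) ω) ^ m ∂P := funext fun l => hABk (ns l)
  rw [h2] at h1
  exact tendsto_nhds_unique h1 hBR
end
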